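/- Let ξ = a + bi be a nonzero Gaussian integer and identify ℤ² with the Gaussian integers ℤ[i] ⊂ ℂ ≅ ℝ². The sublattice ξ·ℤ[i] of ℤ[i] is clean — i.e. every Gaussian integer has a unique nearest point of ξ·ℤ[i] in the Euclidean norm — if and only if N = a² + b² is odd. -/

import Mathlib

/-- 1D rounding: there is `t` with `|c - M t| ≤ M/2`. -/
lemma round_exists (M c : ℤ) (hM : 0 < M) :
    ∃ t : ℤ, -M ≤ 2 * (c - M * t) ∧ 2 * (c - M * t) ≤ M := by
  have h1 : c = M * (c / M) + c % M := (Int.mul_ediv_add_emod c M).symm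
  have h2 : 0 ≤ c % M := Int.emod_nonneg c hM.ne'
  have h3 : c % M < M := Int.emod_lt_of_pos c hM
  by_cases h : 2 * (c % M) ≤ M
  · exact ⟨c / M, by omega⟩
  · refine ⟨c / M + 1, ?_⟩
    have h4 : M * (c / M + 1) = M * (c / M) + M := by ring
    omega

/-- weak 1D minimality. -/
lemma round_min (M c t t' : ℤ) (hM : 0 < M)
    (h1 : -M ≤ 2 * (c - M * t)) (h2 : 2 * (c - M * t) ≤ M) :
    (c - M * t) ^ 2 ≤ (c - M * t') ^ 2 := by
  rcases eq_or_ne t' t with rfl | hne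
  · exact le_refl _
  · have hd : c - M * t' = (c - M * t) + M * (t - t') := by ring
    have h5 : 1 ≤ |t - t'| := Int.one_le_abs (sub_ne_zero.mpr (fun h => hne h.symm))
    have h6 : M ≤ M * |t - t'| := le_mul_of_one_le_right hM.le h5
    have habs : M * |t - t'| = |M * (t - t')| := by
      rw [abs_mul, abs_of_pos hM]
    rcases abs_le.mp (le_of_eq habs.symm) with _
    have h7 : |c - M * t| ≤ |c - M * t'| := by
      rcases abs_cases (t - t') with ⟨he, _⟩ | ⟨he, _⟩ <;>
      rcases abs_cases (c - M * t) with ⟨h8, _⟩ | ⟨h8, _⟩ <;>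
      rcases abs_cases (c - M * t') with ⟨h9, _⟩ | ⟨h9, _⟩ <;>
      · rw [habs] at h6
        rcases abs_cases (M * (t - t')) with ⟨h10, _⟩ | ⟨h10, _⟩ <;> omega
    calc (c - M * t) ^ 2 = |c - M * t| ^ 2 := (sq_abs _).symm
      _ ≤ |c - M * t'| ^ 2 := by
          exact pow_le_pow_left₀ (abs_nonneg _) h7 2
      _ = (c - M * t') ^ 2 := sq_abs _

/-- strict 1D minimality. -/
lemma round_min_strict (M c t t' : ℤ) (hM : 0 < M) (hne : t' ≠ t)
    (h1 : -M < 2 * (c - M * t)) (h2 : 2 * (c - M * t) < M) :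
    (c - M * t) ^ 2 < (c - M * t') ^ 2 := by
  have hd : c - M * t' = (c - M * t) + M * (t - t') := by ring
  have h5 : 1 ≤ |t - t'| := Int.one_le_abs (sub_ne_zero.mpr (fun h => hne h.symm))
  have h6 : M ≤ M * |t - t'| := le_mul_of_one_le_right hM.le h5
  have habs : M * |t - t'| = |M * (t - t')| := by
    rw [abs_mul, abs_of_pos hM]
  have h7 : |c - M * t| < |c - M * t'| := by
    rw [habs] at h6
    rcases abs_cases (c - M * t) with ⟨h8, _⟩ | ⟨h8, _⟩ <;>
    rcases abs_cases (c - M * t') with ⟨h9, _⟩ | ⟨h9, _⟩ <;>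
    rcases abs_cases (M * (t - t')) with ⟨h10, _⟩ | ⟨h10, _⟩ <;> omega
  calc (c - M * t) ^ 2 = |c - M * t| ^ 2 := (sq_abs _).symm
    _ < |c - M * t'| ^ 2 := by
        exact pow_lt_pow_left₀ h7 (abs_nonneg _) two_ne_zero
    _ = (c - M * t') ^ 2 := sq_abs _

theorem stmt12 (a b : ℤ) (hξ : (⟨a, b⟩ : GaussianInt) ≠ 0) :
    (∀ z : GaussianInt, ∃! w : GaussianInt,
        ∀ w' : GaussianInt,
          ‖GaussianInt.toComplex (z - ⟨a, b⟩ * w)‖ ≤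
            ‖GaussianInt.toComplex (z - ⟨a, b⟩ * w')‖) ↔
      Odd (a ^ 2 + b ^ 2) := by
  set N : ℤ := a ^ 2 + b ^ 2 with hNdef
  set ξ : GaussianInt := ⟨a, b⟩ with hξdef
  have hNnorm : Zsqrtd.norm ξ = N := by
    simp [Zsqrtd.norm, hξdef, hNdef]; ring
  have hN : 0 < N := hNnorm ▸ GaussianInt.norm_pos.mpr hξ
  -- the separated quadratic form
  set g : GaussianInt → GaussianInt → ℤ := fun z w =>
    (a * z.re + b * z.im - N * w.re) ^ 2 + (a * z.im - b * z.re - N * w.im) ^ 2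
    with hgdef
  have hg : ∀ z w : GaussianInt, N * Zsqrtd.norm (z - ξ * w) = g z w := by
    intro z w
    simp only [hgdef, Zsqrtd.norm, hξdef, Zsqrtd.re_sub, Zsqrtd.im_sub,
      Zsqrtd.re_mul, Zsqrtd.im_mul, hNdef]
    ring
  have key : ∀ z w w' : GaussianInt,
      (‖GaussianInt.toComplex (z - ξ * w)‖ ≤ ‖GaussianInt.toComplex (z - ξ * w')‖)
        ↔ g z w ≤ g z w' := by
    intro z w w'
    rw [show ∀ u v : ℂ, (‖u‖ ≤ ‖v‖ ↔ Complex.normSq u ≤ Complex.normSq v) from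
      fun u v => by
        rw [← Complex.sq_norm, ← Complex.sq_norm]
        exact (pow_le_pow_iff_left₀ (norm_nonneg u) (norm_nonneg v)
          two_ne_zero).symm]
    rw [← GaussianInt.intCast_real_norm, ← GaussianInt.intCast_real_norm,
      Int.cast_le]
    constructor
    · intro h
      have := mul_le_mul_of_nonneg_left h hN.le
      rwa [hg, hg] at this
    · intro h
      have h2 : N * Zsqrtd.norm (z - ξ * w) ≤ N * Zsqrtd.norm (z - ξ * w') := by
        rwa [hg, hg]
      exact le_of_mul_le_mul_left h2 hN
  constructor
  · -- clean → N odd, contrapositive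
    intro hclean
    by_contra hodd
    have heven : Even N := Int.not_odd_iff_even.mp hodd
    -- construct z with 2*(a*z.re + b*z.im) = N
    obtain ⟨z, hz⟩ : ∃ z : GaussianInt, 2 * (a * z.re + b * z.im) = N := by
      rcases Int.even_or_odd a with ⟨k, hk⟩ | ⟨k, hk⟩ <;>
        rcases Int.even_or_odd b with ⟨m, hm⟩ | ⟨m, hm⟩
      · exact ⟨⟨k, m⟩, by subst hk hm; simp [hNdef]; ring⟩
      · exfalso
        obtain ⟨r, hr⟩ := heven
        have ha2 : a ^ 2 = 4 * k ^ 2 := by subst hk; ring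
        have hb2 : b ^ 2 = 4 * m ^ 2 + 4 * m + 1 := by subst hm; ring
        omega
      · exfalso
        obtain ⟨r, hr⟩ := heven
        have ha2 : a ^ 2 = 4 * k ^ 2 + 4 * k + 1 := by subst hk; ring
        have hb2 : b ^ 2 = 4 * m ^ 2 := by subst hm; ring
        omega
      · refine ⟨⟨k + m + 1, m - k⟩, ?_⟩
        subst hk hm; simp [hNdef]; ring
    set c : ℤ := a * z.re + b * z.im with hcdef
    set d : ℤ := a * z.im - b * z.re with hddef
    obtain ⟨td, htd1, htd2⟩ := round_exists N d hN
    obtain ⟨y, hy, huniq⟩ := hclean z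
    have hmin : ∀ tc : ℤ, -N ≤ 2 * (c - N * tc) → 2 * (c - N * tc) ≤ N →
        (⟨tc, td⟩ : GaussianInt) = y := by
      intro tc h1 h2
      refine huniq _ ?_
      intro w'
      rw [key]
      simp only [hgdef, ← hcdef, ← hddef]
      have e1 := round_min N c tc w'.re hN h1 h2
      have e2 := round_min N d td w'.im hN htd1 htd2
      omega
    have h0 : (⟨0, td⟩ : GaussianInt) = y := hmin 0 (by omega) (by omega)
    have h1 : (⟨1, td⟩ : GaussianInt) = y := hmin 1 (by omega) (by omega)
    have : (0 : ℤ) = 1 := by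
      have := h0.trans h1.symm
      exact congrArg Zsqrtd.re this
    omega
  · -- N odd → clean
    intro hodd z
    set c : ℤ := a * z.re + b * z.im with hcdef
    set d : ℤ := a * z.im - b * z.re with hddef
    obtain ⟨tc, htc1, htc2⟩ := round_exists N c hN
    obtain ⟨td, htd1, htd2⟩ := round_exists N d hN
    obtain ⟨r, hr⟩ := hodd
    have htc1' : -N < 2 * (c - N * tc) := by omega
    have htc2' : 2 * (c - N * tc) < N := by omega
    have htd1' : -N < 2 * (d - N * td) := by omega
    have htd2' : 2 * (d - N * td) < N := by omega
    refine ⟨⟨tc, td⟩, ?_, ?_⟩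
    · intro w'
      rw [key]
      simp only [hgdef, ← hcdef, ← hddef]
      have e1 := round_min N c tc w'.re hN htc1 htc2
      have e2 := round_min N d td w'.im hN htd1 htd2
      omega
    · intro w₁ hw₁
      have hle := hw₁ ⟨tc, td⟩
      rw [key] at hle
      by_contra hne
      have : w₁.re ≠ tc ∨ w₁.im ≠ td := by
        by_contra h
        push_neg at h
        exact hne (Zsqrtd.ext h.1 h.2)
      have hlt : g z ⟨tc, td⟩ < g z w₁ := by
        simp only [hgdef, ← hcdef, ← hddef]
        rcases this with h | h
        · have e1 := round_min_strict N c tc w₁.re hN h htc1' htc2'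
          have e2 := round_min N d td w₁.im hN htd1 htd2
          omega
        · have e1 := round_min N c tc w₁.re hN htc1 htc2
          have e2 := round_min_strict N d td w₁.im hN h htd1' htd2'
          omega
      simp only [hgdef, ← hcdef, ← hddef] at hle hlt
      omega
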